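/- Let (W,S) be a finite Coxeter system with longest element w_0, and let w ↦ w* be an involutory automorphism of (W,S) (an automorphism of W preserving S with square the identity). Let Γ_* be the W-digraph associated to *, and let Γ_# be the W-digraph associated to the involutory automorphism w ↦ w^# = w_0 w* w_0. Then (Γ_*)_rev is isomorphic to Γ_# via the bijection sending the vertex m_x of Γ_* (for x a twisted involution with respect to *) to the vertex m_{x w_0} of Γ_#. -/

import Mathlib

open Finsupp

set_option synthInstance.maxHeartbeats 1000000
set_option maxHeartbeats 1000000

noncomputable section

/-- The field `ℚ(u)` of rational functions. -/
abbrev Kq : Type := RatFunc ℚ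

/-- The indeterminate `u`. -/
def uu : Kq := RatFunc.X


namespace CoxAux
open scoped Classical

open CoxeterSystem List

@[ext] structure NuM (W : Type*) where
  f : W → ZMod 2
  u : W

variable {W : Type*} [Group W]

instance : One (NuM W) := ⟨⟨fun _ => 0, 1⟩⟩
instance : Mul (NuM W) := ⟨fun a b => ⟨fun x => a.f x + b.f (a.u⁻¹ * x * a.u), a.u * b.u⟩⟩

@[simp] lemma one_f (x : W) : (1 : NuM W).f x = 0 := rfl
@[simp] lemma one_u : (1 : NuM W).u = 1 := rfl
@[simp] lemma mul_f (a b : NuM W) (x : W) :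
    (a * b).f x = a.f x + b.f (a.u⁻¹ * x * a.u) := rfl
@[simp] lemma mul_u (a b : NuM W) : (a * b).u = a.u * b.u := rfl

instance : Monoid (NuM W) where
  mul_assoc a b c := by
    refine NuM.ext (funext fun x => ?_) ?_
    · simp only [mul_f, mul_u, mul_inv_rev, add_assoc]
      congr 2
      group
    · simp [mul_assoc]
  one_mul a := by
    refine NuM.ext (funext fun x => ?_) ?_ <;> simp
  mul_one a := by
    refine NuM.ext (funext fun x => ?_) ?_ <;> simp

lemma pow_u (a : NuM W) : ∀ k : ℕ, (a ^ k).u = a.u ^ k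
  | 0 => by simp [pow_zero]
  | (k+1) => by rw [pow_succ, pow_succ, mul_u, pow_u a k]

lemma pow_f (a : NuM W) : ∀ (k : ℕ) (x : W),
    (a ^ k).f x = ∑ r ∈ Finset.range k, a.f ((a.u ^ r)⁻¹ * x * a.u ^ r)
  | 0, x => by simp [pow_zero]
  | (k+1), x => by
      rw [pow_succ, mul_f, pow_f a k, pow_u, Finset.sum_range_succ]

lemma sum_pair (N : ℕ) (g : ℕ → ZMod 2) :
    ∑ r ∈ Finset.range N, (g (2*r) + g (2*r+1)) = ∑ k ∈ Finset.range (2*N), g k := by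
  induction N with
  | zero => simp
  | succ n ih =>
    rw [Finset.sum_range_succ, ih, Nat.mul_succ, show 2*n+2 = (2*n+1)+1 from rfl,
      Finset.sum_range_succ, Finset.sum_range_succ, add_assoc]

variable {B : Type*} {M : CoxeterMatrix B} (cs : CoxeterSystem M W)

noncomputable def sgen (i : B) : NuM W := ⟨fun x => if x = cs.simple i then 1 else 0, cs.simple i⟩

lemma liftable : M.IsLiftable (sgen cs) := by
  intro i j
  have hc : (cs.simple i * cs.simple j) ^ M i j = 1 := cs.simple_mul_simple_pow i j
  set m := M i j
  set s := cs.simple i with hs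
  set t := cs.simple j with ht
  set c := s * t with hcdef
  have hss : s * s = 1 := cs.simple_mul_simple_self i
  have htt : t * t = 1 := cs.simple_mul_simple_self j
  have hs1 : s * c⁻¹ = c * s := by
    rw [hcdef, mul_inv_rev, hs, ht, cs.inv_simple, cs.inv_simple, ← mul_assoc, mul_assoc]
  have hsc : ∀ r : ℕ, s * (c ^ r)⁻¹ = c ^ r * s := by
    intro r; induction r with
    | zero => simp
    | succ n ih =>
      rw [pow_succ, mul_inv_rev, ← mul_assoc, hs1, mul_assoc, ih, ← mul_assoc, ← pow_succ', pow_succ]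
  have conj_eq : ∀ (r : ℕ) (y : W) (z : W), ((c ^ r)⁻¹ * z * c ^ r = y) ↔ (z = c ^ r * y * (c ^ r)⁻¹) := by
    intro r y z
    constructor
    · intro h; rw [← h]; group
    · intro h; rw [h]; group
  have E1 : ∀ r : ℕ, c ^ r * s * (c ^ r)⁻¹ = c ^ (2*r) * s := by
    intro r
    rw [mul_assoc, hsc r, ← mul_assoc, ← pow_add, two_mul]
  have E2 : ∀ r : ℕ, c ^ r * (c * s) * (c ^ r)⁻¹ = c ^ (2*r+1) * s := by
    intro r
    rw [show c ^ r * (c * s) * (c ^ r)⁻¹ = c ^ (r+1) * (s * (c ^ r)⁻¹) from by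
      rw [pow_succ]; group, hsc r, ← mul_assoc, ← pow_add]
    congr 1
    ring_nf
  have hsgen_u : (sgen cs i * sgen cs j).u = c := rfl
  refine NuM.ext (funext fun x => ?_) ?_
  · rw [pow_f, one_f, hsgen_u]
    have hterm : ∀ r ∈ Finset.range m, (sgen cs i * sgen cs j).f ((c ^ r)⁻¹ * x * c ^ r)
        = (if x = c ^ (2*r) * s then (1 : ZMod 2) else 0)
          + (if x = c ^ (2*r+1) * s then (1:ZMod 2) else 0) := by
      intro r _
      rw [mul_f]
      congr 1
      · show (if (c ^ r)⁻¹ * x * c ^ r = s then (1:ZMod 2) else 0) = _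
        rw [conj_eq, E1]
      · show (if (sgen cs i).u⁻¹ * ((c ^ r)⁻¹ * x * c ^ r) * (sgen cs i).u = t then (1:ZMod 2) else 0) = _
        have hu : (sgen cs i).u = s := rfl
        rw [hu]
        have : (s⁻¹ * ((c ^ r)⁻¹ * x * c ^ r) * s = t) ↔ ((c ^ r)⁻¹ * x * c ^ r = s * t * s⁻¹) := by
          constructor
          · intro h; rw [← h]; group
          · intro h; rw [h]; group
        rw [this, show s * t * s⁻¹ = c * s from by rw [hs, cs.inv_simple, ← hs, hcdef], conj_eq, E2]
    set g : ℕ → ZMod 2 := fun k => if x = c ^ k * s then 1 else 0 with hg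
    have hterm' : ∀ r ∈ Finset.range m, (sgen cs i * sgen cs j).f ((c ^ r)⁻¹ * x * c ^ r)
        = g (2*r) + g (2*r+1) := hterm
    have hshift : ∀ k ∈ Finset.range m, g (m+k) = g k := by
      intro k _; show (if x = c ^ (m+k) * s then (1:ZMod 2) else 0) = _
      rw [pow_add, hc, one_mul]
    have h2 : ∀ z : ZMod 2, z + z = 0 := by decide
    calc ∑ r ∈ Finset.range m, (sgen cs i * sgen cs j).f ((c ^ r)⁻¹ * x * c ^ r)
        = ∑ r ∈ Finset.range m, (g (2*r) + g (2*r+1)) := Finset.sum_congr rfl hterm'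
      _ = ∑ k ∈ Finset.range (2*m), g k := sum_pair m g
      _ = ∑ k ∈ Finset.range (m+m), g k := by rw [two_mul]
      _ = ∑ k ∈ Finset.range m, g k + ∑ k ∈ Finset.range m, g (m+k) := Finset.sum_range_add g m m
      _ = ∑ k ∈ Finset.range m, g k + ∑ k ∈ Finset.range m, g k := by
            rw [Finset.sum_congr rfl hshift]
      _ = 0 := h2 _
  · rw [pow_u, one_u, hsgen_u, hc]


noncomputable def nuH : W →* NuM W := cs.lift ⟨sgen cs, liftable cs⟩

noncomputable def nu (w x : W) : ZMod 2 := (nuH cs w).f x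

lemma nuH_u (w : W) : (nuH cs w).u = w := by
  apply cs.simple_induction w
  · intro i
    rw [nuH, cs.lift_apply_simple]
    rfl
  · rw [map_one]; rfl
  · intro w w' hw hw'
    rw [map_mul, mul_u, hw, hw']

lemma nu_mul (u v x : W) : nu cs (u * v) x = nu cs u x + nu cs v (u⁻¹ * x * u) := by
  unfold nu
  rw [map_mul, mul_f, nuH_u]

lemma nu_one (x : W) : nu cs 1 x = 0 := by
  unfold nu; rw [map_one]; rfl

lemma nu_simple (i : B) (x : W) : nu cs (cs.simple i) x = if x = cs.simple i then 1 else 0 := by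
  unfold nu nuH
  rw [cs.lift_apply_simple]
  rfl

lemma zmod2_cancel {a b : ZMod 2} (h : a + b = 0) : b = a := by
  have : ∀ a b : ZMod 2, a + b = 0 → b = a := by decide
  exact this _ _ h

lemma nu_inv (u x : W) : nu cs u⁻¹ x = nu cs u (u * x * u⁻¹) := by
  have h := nu_mul cs u u⁻¹ (u * x * u⁻¹)
  rw [mul_inv_cancel, nu_one] at h
  have : u⁻¹ * (u * x * u⁻¹) * u = x := by group
  rw [this] at h
  exact zmod2_cancel h.symm

lemma leftInvSeq_cons (i : B) (ω : List B) :
    cs.leftInvSeq (i :: ω) = cs.simple i :: List.map (⇑(MulAut.conj (cs.simple i))) (cs.leftInvSeq ω) := rfl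

lemma nu_wordProd [DecidableEq W] : ∀ (ω : List B) (x : W),
    nu cs (cs.wordProd ω) x = ((cs.leftInvSeq ω).count x : ZMod 2)
  | [], x => by
      rw [cs.wordProd_nil, nu_one]
      simp [leftInvSeq]
  | (i :: ω), x => by
      rw [cs.wordProd_cons, nu_mul, nu_simple, nu_wordProd ω, leftInvSeq_cons, List.count_cons]
      have hmap : (List.map (⇑(MulAut.conj (cs.simple i))) (cs.leftInvSeq ω)).count x
          = (cs.leftInvSeq ω).count ((cs.simple i)⁻¹ * x * cs.simple i) := by
        conv_lhs => rw [show x = (MulAut.conj (cs.simple i)) ((cs.simple i)⁻¹ * x * cs.simple i) from by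
          rw [MulAut.conj_apply]; group]
        exact List.count_map_of_injective _ _ (MulAut.conj (cs.simple i)).injective _
      rw [hmap]
      push_cast
      simp only [beq_iff_eq]
      by_cases h : x = cs.simple i
      · simp [h, add_comm]
      · have h2 : ¬ cs.simple i = x := fun hh => h hh.symm
        simp [h, h2, add_comm]

lemma lt_of_nu_eq_one {w t : W} (h : nu cs w t = 1) : cs.length (t * w) < cs.length w := by
  classical
  obtain ⟨ω, hred, rfl⟩ := cs.exists_reduced_word' w
  rw [nu_wordProd] at h
  have hmem : t ∈ cs.leftInvSeq ω := by
    by_contra hmem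
    rw [List.count_eq_zero.mpr hmem] at h
    simp at h
  exact (cs.isLeftInversion_of_mem_leftInvSeq hred hmem).2

lemma nu_isReflection {w t : W} (h : nu cs w t = 1) : cs.IsReflection t := by
  classical
  obtain ⟨ω, hred, rfl⟩ := cs.exists_reduced_word' w
  rw [nu_wordProd] at h
  have hmem : t ∈ cs.leftInvSeq ω := by
    by_contra hmem
    rw [List.count_eq_zero.mpr hmem] at h
    simp at h
  exact cs.isReflection_of_mem_leftInvSeq ω hmem

lemma nu_mul3 (a b c x : W) : nu cs (a * b * c) x
    = nu cs a x + (nu cs b (a⁻¹ * x * a) + nu cs c (b⁻¹ * (a⁻¹ * x * a) * b)) := by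
  rw [mul_assoc, nu_mul, nu_mul]

lemma nu_refl_self {t : W} (ht : cs.IsReflection t) : nu cs t t = 1 := by
  obtain ⟨u, j, rfl⟩ := ht
  rw [nu_mul3]
  rw [show u⁻¹ * (u * cs.simple j * u⁻¹) * u = cs.simple j from by group]
  rw [show (cs.simple j)⁻¹ * cs.simple j * cs.simple j = cs.simple j from by group]
  rw [nu_inv cs u (cs.simple j), nu_simple, if_pos rfl]
  have : ∀ z : ZMod 2, z + (1 + z) = 1 := by decide
  exact this _

lemma length_lt_iff_nu {w t : W} (ht : cs.IsReflection t) :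
    cs.length (t * w) < cs.length w ↔ nu cs w t = 1 := by
  suffices H : ∀ (n : ℕ) (w t : W), cs.IsReflection t → cs.length w = n →
      (cs.length (t * w) < cs.length w ↔ nu cs w t = 1) from H _ w t ht rfl
  intro n
  induction n using Nat.strong_induction_on with
  | _ n IH =>
    intro w t ht hw
    constructor
    · intro h
      have hvw : t * (t * w) = w := by rw [← mul_assoc, ht.mul_self, one_mul]
      have h1 : cs.length (t * w) < n := hw ▸ h
      have h2 := IH (cs.length (t * w)) h1 (t * w) t ht rfl
      have h3 : ¬ cs.length (t * (t * w)) < cs.length (t * w) := by rw [hvw]; omega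
      have h4 : nu cs (t * w) t = 0 := by
        have hne := mt h2.mpr h3
        have hz : ∀ z : ZMod 2, ¬ z = 1 → z = 0 := by decide
        exact hz _ hne
      have h5 : nu cs w t = nu cs t t + nu cs (t * w) (t⁻¹ * t * t) := by
        rw [← nu_mul, hvw]
      have h6 : t⁻¹ * t * t = t := by group
      rw [h5, h6, h4, nu_refl_self cs ht, add_zero]
    · exact lt_of_nu_eq_one cs

lemma length_eq_ncard (w : W) : cs.length w = {x | nu cs w x = 1}.ncard := by
  classical
  obtain ⟨ω, hred, rfl⟩ := cs.exists_reduced_word' w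
  have hnd : (cs.leftInvSeq ω).Nodup := hred.nodup_leftInvSeq
  have hset : {x | nu cs (cs.wordProd ω) x = 1} = ↑(cs.leftInvSeq ω).toFinset := by
    ext x
    simp only [Set.mem_setOf_eq, Finset.coe_sort_coe, Finset.mem_coe, List.mem_toFinset]
    rw [nu_wordProd, List.Nodup.count hnd]
    by_cases h : x ∈ cs.leftInvSeq ω <;> simp [h]
  rw [hset, Set.ncard_coe_finset, List.toFinset_card_of_nodup hnd,
    cs.length_leftInvSeq, ← hred]

lemma nu_inj {u v : W} (h : ∀ x, nu cs u x = nu cs v x) : u = v := by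
  have h0 : ∀ x, nu cs (u⁻¹ * v) x = 0 := by
    intro x
    rw [nu_mul, nu_inv, inv_inv]
    rw [h (u * (x) * u⁻¹)]
    have : ∀ z : ZMod 2, z + z = 0 := by decide
    exact this _
  have hlen : cs.length (u⁻¹ * v) = 0 := by
    rw [length_eq_ncard]
    convert Set.ncard_empty W using 2
    ext x; simp [h0 x]
  exact inv_mul_eq_one.mp (cs.length_eq_zero_iff.mp hlen)


section W0
variable (w₀ : W)

lemma nu_w0_refl (hw₀ : ∀ w : W, cs.length w ≤ cs.length w₀) {t : W} (ht : cs.IsReflection t) : nu cs w₀ t = 1 := by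
  apply (length_lt_iff_nu cs ht).mp
  exact lt_of_le_of_ne (hw₀ _) (ht.length_mul_right_ne w₀)

lemma nu_w0_eq (hw₀ : ∀ w : W, cs.length w ≤ cs.length w₀) (x : W) : nu cs w₀ x = if cs.IsReflection x then 1 else 0 := by
  by_cases h : cs.IsReflection x
  · rw [if_pos h]; exact nu_w0_refl cs w₀ hw₀ h
  · rw [if_neg h]
    by_contra hh
    have hz : ∀ z : ZMod 2, ¬ z = 0 → z = 1 := by decide
    exact h (nu_isReflection cs (hz _ hh))

lemma w0_mul_self (hw₀ : ∀ w : W, cs.length w ≤ cs.length w₀) : w₀ * w₀ = 1 := by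
  have hinv : w₀⁻¹ = w₀ := by
    apply nu_inj cs
    intro x
    rw [nu_inv, nu_w0_eq cs w₀ hw₀, nu_w0_eq cs w₀ hw₀]
    have hiff : cs.IsReflection (w₀ * x * w₀⁻¹) ↔ cs.IsReflection x := cs.isReflection_conj_iff w₀ x
    rw [if_congr hiff rfl rfl]
  nth_rewrite 1 [← hinv]
  exact inv_mul_cancel w₀

lemma length_add_w0 (hw₀ : ∀ w : W, cs.length w ≤ cs.length w₀) [Finite W] (v : W) :
    cs.length v + cs.length (v * w₀) = cs.length w₀ := by
  classical
  have hA : {x | nu cs v x = 1} ⊆ {x | cs.IsReflection x} := fun x hx => nu_isReflection cs hx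
  have hC : {x | nu cs (v * w₀) x = 1} = {x | cs.IsReflection x} \ {x | nu cs v x = 1} := by
    ext x
    simp only [Set.mem_setOf_eq, Set.mem_diff]
    rw [nu_mul, nu_w0_eq cs w₀ hw₀ (v⁻¹ * x * v)]
    have hrc : cs.IsReflection (v⁻¹ * x * v) ↔ cs.IsReflection x := by
      have := cs.isReflection_conj_iff v⁻¹ x
      rwa [inv_inv] at this
    rw [if_congr hrc rfl rfl]
    by_cases h : cs.IsReflection x
    · rw [if_pos h]
      have hz : ∀ z : ZMod 2, (z + 1 = 1 ↔ ¬ z = 1) := by decide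
      rw [hz]
      exact ⟨fun hh => ⟨h, hh⟩, fun hh => hh.2⟩
    · rw [if_neg h, add_zero]
      constructor
      · intro hh; exact absurd (nu_isReflection cs hh) h
      · rintro ⟨hx, -⟩; exact absurd hx h
  have hw0set : {x | nu cs w₀ x = 1} = {x | cs.IsReflection x} := by
    ext x
    simp only [Set.mem_setOf_eq]
    rw [nu_w0_eq cs w₀ hw₀]
    by_cases h : cs.IsReflection x <;> simp [h]
  have hRf : {x : W | cs.IsReflection x}.Finite := Set.toFinite _
  have hkey := Set.ncard_diff_add_ncard_of_subset hA hRf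
  rw [length_eq_ncard cs v, length_eq_ncard cs (v*w₀), length_eq_ncard cs w₀, hC, hw0set]
  omega

end W0

section Sigma
variable (σ : W ≃* W)

lemma nu_sigma (hσS : ∀ i : B, ∃ j : B, σ (cs.simple i) = cs.simple j) : ∀ (ω : List B) (x : W),
    nu cs (σ (cs.wordProd ω)) (σ x) = nu cs (cs.wordProd ω) x
  | [], x => by rw [cs.wordProd_nil, map_one, nu_one, nu_one]
  | (i :: ω), x => by
      obtain ⟨j, hj⟩ := hσS i
      rw [cs.wordProd_cons, map_mul, hj, nu_mul, nu_mul, nu_simple, nu_simple]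
      have h1 : (σ x = cs.simple j) ↔ (x = cs.simple i) := by
        rw [← hj]; exact ⟨fun h => σ.injective h, fun h => by rw [h]⟩
      have h2 : (cs.simple j)⁻¹ * σ x * cs.simple j = σ ((cs.simple i)⁻¹ * x * cs.simple i) := by
        rw [map_mul, map_mul, map_inv, hj]
      rw [if_congr h1 rfl rfl, h2, nu_sigma hσS ω]

lemma nu_sigma' (hσS : ∀ i : B, ∃ j : B, σ (cs.simple i) = cs.simple j) (w x : W) : nu cs (σ w) (σ x) = nu cs w x := by
  obtain ⟨ω, _, rfl⟩ := cs.exists_reduced_word' w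
  exact nu_sigma cs σ hσS ω x

lemma isReflection_sigma (hσS : ∀ i : B, ∃ j : B, σ (cs.simple i) = cs.simple j) {t : W} (ht : cs.IsReflection t) : cs.IsReflection (σ t) := by
  obtain ⟨u, i, rfl⟩ := ht
  obtain ⟨j, hj⟩ := hσS i
  rw [map_mul, map_mul, map_inv, hj]
  exact ⟨σ u, j, rfl⟩

lemma sigma_w0 (hσS : ∀ i : B, ∃ j : B, σ (cs.simple i) = cs.simple j)
    (hσ2 : ∀ w, σ (σ w) = w) (w₀ : W) (hw₀ : ∀ w : W, cs.length w ≤ cs.length w₀) : σ w₀ = w₀ := by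
  apply nu_inj cs
  intro x
  calc nu cs (σ w₀) x = nu cs (σ w₀) (σ (σ x)) := by rw [hσ2]
  _ = nu cs w₀ (σ x) := nu_sigma' cs σ hσS w₀ (σ x)
  _ = nu cs w₀ x := by
      rw [nu_w0_eq cs w₀ hw₀, nu_w0_eq cs w₀ hw₀]
      have hiff : cs.IsReflection (σ x) ↔ cs.IsReflection x := by
        constructor
        · intro h
          have := isReflection_sigma cs σ hσS h
          rwa [hσ2] at this
        · exact fun h => isReflection_sigma cs σ hσS h
      rw [if_congr hiff rfl rfl]

lemma length_sigma (hσS : ∀ i : B, ∃ j : B, σ (cs.simple i) = cs.simple j)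
    (hσ2 : ∀ w, σ (σ w) = w) (w : W) : cs.length (σ w) = cs.length w := by
  rw [length_eq_ncard, length_eq_ncard]
  have himg : {x | nu cs (σ w) x = 1} = σ '' {x | nu cs w x = 1} := by
    ext x
    simp only [Set.mem_setOf_eq, Set.mem_image]
    constructor
    · intro h
      refine ⟨σ x, ?_, hσ2 x⟩
      rw [← nu_sigma' cs σ hσS w (σ x), hσ2]
      exact h
    · rintro ⟨y, hy, rfl⟩
      rw [nu_sigma' cs σ hσS]
      exact hy
  rw [himg, Set.ncard_image_of_injective _ σ.injective]

end Sigma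

end CoxAux


/-- An `S`-labeled digraph on vertex type `V` with labels in `B`:
`Edge a b s d` means there is an edge from `a` to `b` labeled `s`, which is
dashed if `d = true` and solid if `d = false`.  There are no loops, and every
vertex occurs in exactly one edge with any given label. -/
structure SLabeledDigraph (V B : Type*) where
  Edge : V → V → B → Bool → Prop
  no_loop : ∀ v s d, ¬ Edge v v s d
  unique_edge : ∀ v s, ∃! e : V × V × Bool,
    (e.1 = v ∨ e.2.1 = v) ∧ Edge e.1 e.2.1 s e.2.2

namespace SLabeledDigraph

variable {V B : Type*} (Γ : SLabeledDigraph V B)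

/-- Swap the endpoints of an edge datum. -/
def eswap {V : Type*} (e : V × V × Bool) : V × V × Bool := (e.2.1, e.1, e.2.2)

/-- The reversed digraph `Γ_rev`, with all edge directions reversed but types
and labels kept. -/
def rev : SLabeledDigraph V B where
  Edge a b s d := Γ.Edge b a s d
  no_loop v s d := Γ.no_loop v s d
  unique_edge v s := by
    obtain ⟨e, ⟨hinc, hedge⟩, huniq⟩ := Γ.unique_edge v s
    refine ⟨eswap e, ⟨Or.symm hinc, hedge⟩, ?_⟩
    rintro e' ⟨hinc', hedge'⟩
    have h1 : eswap e' = e := huniq (eswap e') ⟨Or.symm hinc', hedge'⟩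
    calc e' = eswap (eswap e') := rfl
    _ = eswap e := by rw [h1]

/-- The restriction `Γ_J`: same vertices, only edges with labels in `J`. -/
def restrict (J : Set B) : SLabeledDigraph V J where
  Edge a b s d := Γ.Edge a b s.1 d
  no_loop v s d := Γ.no_loop v s.1 d
  unique_edge v s := Γ.unique_edge v s.1

/-- Directed adjacency (ignoring labels and edge types). -/
def DAdj (a b : V) : Prop := ∃ s d, Γ.Edge a b s d

/-- Undirected adjacency. -/
def UAdj (a b : V) : Prop := Γ.DAdj a b ∨ Γ.DAdj b a

/-- `Γ` is connected if any two vertices are joined by an undirected path. -/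
def Connected : Prop := ∀ a b : V, Relation.ReflTransGen Γ.UAdj a b

/-- A source is a vertex at which no edge ends. -/
def IsSource (a : V) : Prop := ∀ b s d, ¬ Γ.Edge b a s d

/-- A sink is a vertex at which no edge begins. -/
def IsSink (a : V) : Prop := ∀ b s d, ¬ Γ.Edge a b s d

/-- `Γ` is acyclic if it has no nonempty directed circuit. -/
def Acyclic : Prop := ∀ a : V, ¬ Relation.TransGen Γ.DAdj a a

/-- The setoid whose classes are the connected components of `Γ`. -/
def compSetoid : Setoid V :=
  ⟨Relation.ReflTransGen Γ.UAdj,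
    ⟨fun _ => Relation.ReflTransGen.refl,
     fun h => haveI : Std.Symm Γ.UAdj := ⟨fun _ _ hab => Or.symm hab⟩; Std.Symm.symm _ _ h,
     fun h1 h2 => Relation.ReflTransGen.trans h1 h2⟩⟩

end SLabeledDigraph

/-- The Hecke algebra of a Coxeter system over `ℚ(u)`: an associative
`ℚ(u)`-algebra `H` with basis `{T_w : w ∈ W}` such that `T_1 = 1` and
`T_s T_w = T_{sw}` if `ℓ(sw) > ℓ(w)`, while
`T_s T_w = u² T_{sw} + (u² - 1) T_w` if `ℓ(sw) < ℓ(w)`. -/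
structure HeckeAlgebra {B W : Type*} [Group W] {M : CoxeterMatrix B}
    (cs : CoxeterSystem M W) (H : Type*) [Ring H] [Algebra Kq H] where
  T : W → H
  basis : Module.Basis W Kq H
  basis_eq : ∀ w, basis w = T w
  T_one : T 1 = 1
  T_mul_of_lt : ∀ (i : B) (w : W), cs.length w < cs.length (cs.simple i * w) →
    T (cs.simple i) * T w = T (cs.simple i * w)
  T_mul_of_gt : ∀ (i : B) (w : W), cs.length (cs.simple i * w) < cs.length w →
    T (cs.simple i) * T w = (uu ^ 2) • T (cs.simple i * w) + (uu ^ 2 - 1) • T w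

variable {B W : Type*} [Group W] {M : CoxeterMatrix B}
variable {H : Type*} [Ring H] [Algebra Kq H]

/-- `ρ` is the representation of `H` on `M(Γ)` (the `ℚ(u)`-vector space with
basis the vertices of `Γ`) in which each `T_s` acts by the operator `τ_s`
determined by the edges of `Γ`. -/
def WDigraphRep {V : Type*} (cs : CoxeterSystem M W) (ha : HeckeAlgebra cs H)
    (Γ : SLabeledDigraph V B)
    (ρ : H →ₐ[Kq] Module.End Kq (V →₀ Kq)) : Prop :=
  ∀ (a b : V) (i : B),
    (Γ.Edge a b i false →
      ρ (ha.T (cs.simple i)) (single a (1 : Kq)) = single b (1 : Kq) ∧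
      ρ (ha.T (cs.simple i)) (single b (1 : Kq))
        = (uu ^ 2 - 1) • single b (1 : Kq) + (uu ^ 2) • single a (1 : Kq)) ∧
    (Γ.Edge a b i true →
      ρ (ha.T (cs.simple i)) (single a (1 : Kq)) = uu • single a (1 : Kq) + (uu + 1) • single b (1 : Kq) ∧
      ρ (ha.T (cs.simple i)) (single b (1 : Kq))
        = (uu ^ 2 - uu - 1) • single b (1 : Kq) + (uu ^ 2 - uu) • single a (1 : Kq))

/-- `Γ` is a `W`-digraph: the assignment `T_s ↦ τ_s` extends to a
representation of `H` on `M(Γ)`. -/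
def IsWDigraph {V : Type*} (cs : CoxeterSystem M W) (ha : HeckeAlgebra cs H)
    (Γ : SLabeledDigraph V B) : Prop :=
  ∃ ρ : H →ₐ[Kq] Module.End Kq (V →₀ Kq), WDigraphRep cs ha Γ ρ


/-- `Γ` is the `W`-digraph `Γ_*` associated to the (involutory) automorphism
`σ` of `(W,S)`: its vertices are the twisted involutions
`{x : W // σ x = x⁻¹}`, with a solid edge `m_x → m_{s x σ(s)}` labeled `i`
when `s x ≠ x σ(s)` and `ℓ(s x) > ℓ(x)` (where `s = simple i`), and a dashed
edge `m_x → m_{s x}` labeled `i` when `s x = x σ(s)` and `ℓ(s x) > ℓ(x)`. -/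
def IsTwistedInvolutionDigraph (cs : CoxeterSystem M W) (σ : W →* W)
    (Γ : SLabeledDigraph {x : W // σ x = x⁻¹} B) : Prop :=
  ∀ (x y : {x : W // σ x = x⁻¹}) (i : B),
    (Γ.Edge x y i false ↔
      cs.simple i * x.1 ≠ x.1 * σ (cs.simple i) ∧
      cs.length x.1 < cs.length (cs.simple i * x.1) ∧
      y.1 = cs.simple i * x.1 * σ (cs.simple i)) ∧
    (Γ.Edge x y i true ↔
      cs.simple i * x.1 = x.1 * σ (cs.simple i) ∧
      cs.length x.1 < cs.length (cs.simple i * x.1) ∧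
      y.1 = cs.simple i * x.1)

/-- Let `(W,S)` be finite with longest element `w₀`, let
`*` be an involutory automorphism of `(W,S)`, and let `#` be the involutory
automorphism `w ↦ w₀ w* w₀`.  Then `(Γ_*)_rev` is isomorphic to `Γ_#` via
`m_x ↦ m_{x w₀}`. -/
theorem twisted_digraph_rev_iso [Finite W]
    (cs : CoxeterSystem M W)
    (w₀ : W) (hw₀ : ∀ w : W, cs.length w ≤ cs.length w₀)
    (σ : W ≃* W) (hσ2 : ∀ w, σ (σ w) = w)
    (hσS : ∀ i : B, ∃ j : B, σ (cs.simple i) = cs.simple j)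
    (σs : W ≃* W) (hσs : ∀ w, σs w = w₀ * σ w * w₀)
    (Γstar : SLabeledDigraph {x : W // σ x = x⁻¹} B)
    (hΓstar : IsTwistedInvolutionDigraph cs σ Γstar)
    (Γsharp : SLabeledDigraph {x : W // σs x = x⁻¹} B)
    (hΓsharp : IsTwistedInvolutionDigraph cs σs Γsharp) :
    ∃ φ : {x : W // σ x = x⁻¹} ≃ {x : W // σs x = x⁻¹},
      (∀ x, (φ x).1 = x.1 * w₀) ∧
      ∀ (a b : {x : W // σ x = x⁻¹}) (i : B) (d : Bool),
        Γstar.rev.Edge a b i d ↔ Γsharp.Edge (φ a) (φ b) i d := by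
  
  classical
  have hσlen : ∀ v : W, cs.length (σ v) = cs.length v :=
    CoxAux.length_sigma cs σ hσS hσ2
  have hw0sq : w₀ * w₀ = 1 := CoxAux.w0_mul_self cs w₀ hw₀
  have hw0inv : w₀⁻¹ = w₀ := inv_eq_of_mul_eq_one_right hw0sq
  have hσw0 : σ w₀ = w₀ := CoxAux.sigma_w0 cs σ hσS hσ2 w₀ hw₀
  have hlenw0 : ∀ v : W, cs.length v + cs.length (v * w₀) = cs.length w₀ :=
    CoxAux.length_add_w0 cs w₀ hw₀
  have hΓstarN : ∀ (x y : {x : W // σ x = x⁻¹}) (i : B),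
      (Γstar.Edge x y i false ↔
        cs.simple i * x.1 ≠ x.1 * σ (cs.simple i) ∧
        cs.length x.1 < cs.length (cs.simple i * x.1) ∧
        y.1 = cs.simple i * x.1 * σ (cs.simple i)) ∧
      (Γstar.Edge x y i true ↔
        cs.simple i * x.1 = x.1 * σ (cs.simple i) ∧
        cs.length x.1 < cs.length (cs.simple i * x.1) ∧
        y.1 = cs.simple i * x.1) := fun x y i => hΓstar x y i
  have hΓsharpN : ∀ (x y : {x : W // σs x = x⁻¹}) (i : B),
      (Γsharp.Edge x y i false ↔
        cs.simple i * x.1 ≠ x.1 * σs (cs.simple i) ∧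
        cs.length x.1 < cs.length (cs.simple i * x.1) ∧
        y.1 = cs.simple i * x.1 * σs (cs.simple i)) ∧
      (Γsharp.Edge x y i true ↔
        cs.simple i * x.1 = x.1 * σs (cs.simple i) ∧
        cs.length x.1 < cs.length (cs.simple i * x.1) ∧
        y.1 = cs.simple i * x.1) := fun x y i => hΓsharp x y i
  have hss : ∀ i : B, cs.simple i * cs.simple i = 1 := fun i => cs.simple_mul_simple_self i
  have hts : ∀ i : B, σ (cs.simple i) * σ (cs.simple i) = 1 := by
    intro i; obtain ⟨j, hj⟩ := hσS i; rw [hj]; exact cs.simple_mul_simple_self j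
  have hσσs : ∀ i : B, σ (σ (cs.simple i)) = cs.simple i := fun i => hσ2 _
  have hmemb : ∀ (x : W), σ x = x⁻¹ → ∀ i : B,
      σ (cs.simple i * x * σ (cs.simple i)) = (cs.simple i * x * σ (cs.simple i))⁻¹ := by
    intro x hx i
    have hinvt : (σ (cs.simple i))⁻¹ = σ (cs.simple i) := by
      obtain ⟨j, hj⟩ := hσS i; rw [hj, cs.inv_simple]
    rw [map_mul, map_mul, hσσs, hx, mul_inv_rev, mul_inv_rev, hinvt, cs.inv_simple, mul_assoc]
  have collapse : ∀ (i : B) (u : W),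
      cs.simple i * (cs.simple i * u * σ (cs.simple i)) * σ (cs.simple i) = u := by
    intro i u
    rw [show cs.simple i * (cs.simple i * u * σ (cs.simple i)) * σ (cs.simple i)
        = (cs.simple i * cs.simple i) * u * (σ (cs.simple i) * σ (cs.simple i)) from by group,
      hss i, hts i, one_mul, mul_one]
  have hGL : ∀ (x : {x : W // σ x = x⁻¹}) (i : B),
      cs.simple i * x.1 ≠ x.1 * σ (cs.simple i) →
      cs.length x.1 < cs.length (cs.simple i * x.1) →
      cs.length (x.1 * σ (cs.simple i)) < cs.length (cs.simple i * x.1 * σ (cs.simple i)) := by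
    intro x i hne hlt
    by_contra hcon
    push_neg at hcon
    have hne2 : cs.length (cs.simple i * x.1 * σ (cs.simple i))
        ≠ cs.length (x.1 * σ (cs.simple i)) := by
      have := cs.length_simple_mul_ne (x.1 * σ (cs.simple i)) i
      rw [← mul_assoc] at this
      exact this
    have hlt2 : cs.length (cs.simple i * x.1 * σ (cs.simple i))
        < cs.length (x.1 * σ (cs.simple i)) := lt_of_le_of_ne hcon hne2
    set y : {x : W // σ x = x⁻¹} := ⟨cs.simple i * x.1 * σ (cs.simple i), hmemb x.1 x.2 i⟩ with hy
    have hy1 : cs.simple i * y.1 = x.1 * σ (cs.simple i) := by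
      show cs.simple i * (cs.simple i * x.1 * σ (cs.simple i)) = _
      rw [show cs.simple i * (cs.simple i * x.1 * σ (cs.simple i))
          = (cs.simple i * cs.simple i) * (x.1 * σ (cs.simple i)) from by group, hss i, one_mul]
    have hy2 : y.1 * σ (cs.simple i) = cs.simple i * x.1 := by
      show (cs.simple i * x.1 * σ (cs.simple i)) * σ (cs.simple i) = _
      rw [show (cs.simple i * x.1 * σ (cs.simple i)) * σ (cs.simple i)
          = (cs.simple i * x.1) * (σ (cs.simple i) * σ (cs.simple i)) from by group, hts i, mul_one]
    have e1 : Γstar.Edge x y i false := (hΓstarN x y i).1.mpr ⟨hne, hlt, rfl⟩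
    have e2 : Γstar.Edge y x i false := by
      apply (hΓstarN y x i).1.mpr
      refine ⟨?_, ?_, ?_⟩
      · rw [hy1, hy2]; exact fun h => hne h.symm
      · rw [hy1]; exact hlt2
      · rw [hy1, mul_assoc, hts i, mul_one]
    obtain ⟨e, -, hu⟩ := Γstar.unique_edge x i
    have h1 := hu (x, y, false) ⟨Or.inl rfl, e1⟩
    have h2 := hu (y, x, false) ⟨Or.inr rfl, e2⟩
    have hxy : x = y := congrArg Prod.fst (h1.trans h2.symm)
    apply hne
    have hval : x.1 = cs.simple i * x.1 * σ (cs.simple i) := congrArg Subtype.val hxy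
    calc cs.simple i * x.1 = cs.simple i * (cs.simple i * x.1 * σ (cs.simple i)) := by
          rw [← hval]
    _ = x.1 * σ (cs.simple i) := hy1
  have inEdge : ∀ (a : {x : W // σ x = x⁻¹}) (i : B),
      cs.length (cs.simple i * a.1) < cs.length a.1 →
      ∃ (y : {x : W // σ x = x⁻¹}) (d : Bool), Γstar.Edge y a i d := by
    intro a i hlt
    obtain ⟨⟨y1, y2, d⟩, ⟨hinc, hedge⟩, -⟩ := Γstar.unique_edge a i
    rcases hinc with h | h
    · exfalso
      have hcond : cs.length y1.1 < cs.length (cs.simple i * y1.1) := by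
        cases d with
        | false => exact ((hΓstarN y1 y2 i).1.mp hedge).2.1
        | true => exact ((hΓstarN y1 y2 i).2.mp hedge).2.1
      have h' : y1 = a := h
      rw [h'] at hcond
      omega
    · have h' : y2 = a := h
      refine ⟨y1, d, ?_⟩
      rw [← h']
      exact hedge
  have hφmem : ∀ x : {x : W // σ x = x⁻¹}, σs (x.1 * w₀) = (x.1 * w₀)⁻¹ := by
    intro x
    rw [hσs, map_mul, x.2, hσw0, mul_inv_rev, hw0inv]
    rw [show w₀ * (x.1⁻¹ * w₀) * w₀ = w₀ * x.1⁻¹ * (w₀ * w₀) from by group, hw0sq, mul_one]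
  have hψmem : ∀ y : {x : W // σs x = x⁻¹}, σ (y.1 * w₀) = (y.1 * w₀)⁻¹ := by
    intro y
    have hy : w₀ * σ y.1 * w₀ = y.1⁻¹ := by rw [← hσs]; exact y.2
    have hσy : σ y.1 = w₀ * y.1⁻¹ * w₀ := by
      rw [← hy]
      rw [show w₀ * (w₀ * σ y.1 * w₀) * w₀ = (w₀ * w₀) * σ y.1 * (w₀ * w₀) from by group,
        hw0sq, one_mul, mul_one]
    rw [map_mul, hσw0, hσy, mul_inv_rev, hw0inv, mul_assoc (w₀ * y.1⁻¹) w₀ w₀, hw0sq, mul_one]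
  refine ⟨⟨fun x => ⟨x.1 * w₀, hφmem x⟩, fun y => ⟨y.1 * w₀, hψmem y⟩, ?_, ?_⟩, fun x => rfl, ?_⟩
  · intro x
    apply Subtype.ext
    show x.1 * w₀ * w₀ = x.1
    rw [mul_assoc, hw0sq, mul_one]
  · intro y
    apply Subtype.ext
    show y.1 * w₀ * w₀ = y.1
    rw [mul_assoc, hw0sq, mul_one]
  · intro a b i d
    show Γstar.Edge b a i d ↔ Γsharp.Edge ⟨a.1 * w₀, hφmem a⟩ ⟨b.1 * w₀, hφmem b⟩ i d
    have hsharp := hΓsharpN ⟨a.1 * w₀, hφmem a⟩ ⟨b.1 * w₀, hφmem b⟩ i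
    have hC1 : (cs.simple i * (a.1 * w₀) = (a.1 * w₀) * σs (cs.simple i))
        ↔ (cs.simple i * a.1 = a.1 * σ (cs.simple i)) := by
      rw [hσs]
      rw [show (a.1 * w₀) * (w₀ * σ (cs.simple i) * w₀)
          = a.1 * (w₀ * w₀) * σ (cs.simple i) * w₀ from by group, hw0sq, mul_one]
      rw [← mul_assoc]
      exact mul_left_inj w₀
    have hC2 : (cs.length (a.1 * w₀) < cs.length (cs.simple i * (a.1 * w₀)))
        ↔ (cs.length (cs.simple i * a.1) < cs.length a.1) := by
      rw [← mul_assoc]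
      have h1 := hlenw0 a.1
      have h2 := hlenw0 (cs.simple i * a.1)
      have h3 := cs.length_simple_mul_ne a.1 i
      omega
    have hC3 : (b.1 * w₀ = cs.simple i * (a.1 * w₀) * σs (cs.simple i))
        ↔ (b.1 = cs.simple i * a.1 * σ (cs.simple i)) := by
      rw [hσs]
      rw [show cs.simple i * (a.1 * w₀) * (w₀ * σ (cs.simple i) * w₀)
          = cs.simple i * a.1 * (w₀ * w₀) * σ (cs.simple i) * w₀ from by group, hw0sq, mul_one]
      exact mul_left_inj w₀
    have hC3' : (b.1 * w₀ = cs.simple i * (a.1 * w₀)) ↔ (b.1 = cs.simple i * a.1) := by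
      rw [← mul_assoc]
      exact mul_left_inj w₀
    cases d with
    | true =>
      constructor
      · intro hedge
        obtain ⟨h1, h2, h3⟩ := (hΓstarN b a i).2.mp hedge
        apply hsharp.2.mpr
        have hb : b.1 = cs.simple i * a.1 := by
          rw [h3, ← mul_assoc, hss i, one_mul]
        have haσ : cs.simple i * a.1 = a.1 * σ (cs.simple i) := by
          rw [h3, ← mul_assoc, hss i, one_mul, mul_assoc, ← h1, ← mul_assoc, hss i, one_mul]
        refine ⟨hC1.mpr haσ, hC2.mpr ?_, hC3'.mpr hb⟩
        rw [← hb, h3]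
        exact h2
      · intro hedge
        obtain ⟨h1, h2, h3⟩ := hsharp.2.mp hedge
        rw [hC1] at h1
        rw [hC2] at h2
        rw [hC3'] at h3
        apply (hΓstarN b a i).2.mpr
        refine ⟨?_, ?_, ?_⟩
        · rw [h3, ← mul_assoc, hss i, one_mul, mul_assoc, ← h1, ← mul_assoc, hss i, one_mul]
        · rw [h3, ← mul_assoc (cs.simple i) (cs.simple i) a.1, hss i, one_mul]
          exact h2
        · rw [h3, ← mul_assoc, hss i, one_mul]
    | false =>
      constructor
      · intro hedge
        obtain ⟨h1, h2, h3⟩ := (hΓstarN b a i).1.mp hedge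
        have hsa : cs.simple i * a.1 = b.1 * σ (cs.simple i) := by
          rw [h3, ← mul_assoc, ← mul_assoc, hss i, one_mul]
        have haσ : a.1 * σ (cs.simple i) = cs.simple i * b.1 := by
          rw [h3, mul_assoc, hts i, mul_one]
        apply hsharp.1.mpr
        refine ⟨?_, ?_, ?_⟩
        · intro hcon
          have hcon' := hC1.mp hcon
          rw [hsa, haσ] at hcon'
          exact h1 hcon'.symm
        · apply hC2.mpr
          rw [hsa, h3]
          exact hGL b i h1 h2
        · apply hC3.mpr
          rw [h3]
          exact (collapse i b.1).symm
      · intro hedge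
        obtain ⟨h1, h2, h3⟩ := hsharp.1.mp hedge
        rw [hC2] at h2
        have h1' : cs.simple i * a.1 ≠ a.1 * σ (cs.simple i) := fun hcon => h1 (hC1.mpr hcon)
        rw [hC3] at h3
        obtain ⟨y, dd, hedge'⟩ := inEdge a i h2
        cases dd with
        | true =>
          exfalso
          obtain ⟨k1, k2, k3⟩ := (hΓstarN y a i).2.mp hedge'
          apply h1'
          rw [k3, ← mul_assoc, hss i, one_mul, mul_assoc, ← k1, ← mul_assoc, hss i, one_mul]
        | false =>
          obtain ⟨k1, k2, k3⟩ := (hΓstarN y a i).1.mp hedge'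
          have hyb : y = b := by
            apply Subtype.ext
            rw [h3, k3]
            exact (collapse i y.1).symm
          rw [← hyb]
          exact hedge'
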